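/- (Second-order quantifier elimination for simple generalized Sahlqvist implications) Let φ be a simple generalized Sahlqvist implication with reduced syntactical tree T = ({y_0, y_1, …, y_n}, (R^T_λ), y_0, f), where each label is a regular box-formula or a negative formula; let f_REG(y_i) and f_NEG(y_i) be the sets of regular box-formulas and of negative formulas in f(y_i). Then φ locally corresponds to the first-order formula ∀x_1 … ∀x_n ( ⋀_{y_i R^T_λ y_j} x_i R_λ x_j → ⋁_j ⋁_{ψ ∈ f_NEG(y_j)} (x_j ⊨ ¬ψ)* ), where (·)* is the standard first-order translation of a modal formula in which every atom 'x_m ∈ θ(p^k_i)' is replaced by the #-translation of x_m ∈ KF_{f_REG}^{p^k_i}, and x_0 is the free variable. That is, for every frame F and point w_0 ∈ W: F, w_0 ⊨ φ under every valuation iff this first-order formula holds in F with x_0 interpreted as w_0. -/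

import Mathlib

set_option autoImplicit true

universe u v w

/-- Modal formulas over modality indices `Λ` and propositional variables `V`. -/
inductive MF (Λ : Type u) (V : Type v) : Type (max u v)
  | var : V → MF Λ V
  | top : MF Λ V
  | bot : MF Λ V
  | and : MF Λ V → MF Λ V → MF Λ V
  | or  : MF Λ V → MF Λ V → MF Λ V
  | neg : MF Λ V → MF Λ V
  | imp : MF Λ V → MF Λ V → MF Λ V
  | dia : Λ → MF Λ V → MF Λ V
  | box : Λ → MF Λ V → MF Λ V

namespace MF
variable {Λ : Type u} {V : Type v}

/-- The set of propositional variables occurring in a modal formula. -/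
def vars : MF Λ V → Set V
  | var p => {p}
  | top => ∅
  | bot => ∅
  | and a b => vars a ∪ vars b
  | or a b => vars a ∪ vars b
  | neg a => vars a
  | imp a b => vars a ∪ vars b
  | dia _ a => vars a
  | box _ a => vars a

end MF

/-- Positive modal formulas: built without `¬` and `→`. -/
inductive Positive {Λ : Type u} {V : Type v} : MF Λ V → Prop
  | var (p : V) : Positive (.var p)
  | top : Positive .top
  | bot : Positive .bot
  | and {a b} : Positive a → Positive b → Positive (.and a b)
  | or {a b} : Positive a → Positive b → Positive (.or a b)
  | dia (l) {a} : Positive a → Positive (.dia l a)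
  | box (l) {a} : Positive a → Positive (.box l a)

/-- A Kripke frame with accessibility relations indexed by `Λ`. -/
structure Frame (Λ : Type u) where
  W : Type w
  R : Λ → W → W → Prop

/-- Kripke satisfaction `F, x, θ ⊨ φ`. -/
def sat {Λ : Type u} {V : Type v} (F : Frame Λ) (θ : V → Set F.W) : F.W → MF Λ V → Prop
  | x, .var p => x ∈ θ p
  | _, .top => True
  | _, .bot => False
  | x, .and a b => sat F θ x a ∧ sat F θ x b
  | x, .or a b => sat F θ x a ∨ sat F θ x b
  | x, .neg a => ¬ sat F θ x a
  | x, .imp a b => sat F θ x a → sat F θ x b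
  | x, .dia l a => ∃ y, F.R l x y ∧ sat F θ y a
  | x, .box l a => ∀ y, F.R l x y → sat F θ y a

/-- `BoxF φ p S`: `φ` is a box-formula with head `p`, in which the set of variables
occurring not as the head is `S`. -/
inductive BoxF {Λ : Type u} {V : Type v} : MF Λ V → V → Set V → Prop
  | var (p : V) : BoxF (.var p) p ∅
  | imp {POS ψ p S} : Positive POS → BoxF ψ p S → BoxF (.imp POS ψ) p (MF.vars POS ∪ S)
  | box (l) {ψ p S} : BoxF ψ p S → BoxF (.box l ψ) p S

/-- `RegBF r φ p`: relative to the rank assignment `r`, `φ` is a regular box-formula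
with head `p` (of rank `r p`): all variables of the positive antecedents have rank `< r p`. -/
inductive RegBF {Λ : Type u} {V : Type v} (r : V → ℕ) : MF Λ V → V → Prop
  | var (p : V) : RegBF r (.var p) p
  | imp {POS ψ p} : Positive POS → (∀ q ∈ MF.vars POS, r q < r p) →
      RegBF r ψ p → RegBF r (.imp POS ψ) p
  | box (l) {ψ p} : RegBF r ψ p → RegBF r (.box l ψ) p

/-- The edge relation of the dependency graph of a set `A` of box-formulas:
`p → q` iff `p` occurs (not as the head) in some member of `A` with head `q`. -/
def depEdge {Λ : Type u} {V : Type v} (A : Set (MF Λ V)) (p q : V) : Prop :=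
  ∃ φ ∈ A, ∃ S, BoxF φ q S ∧ p ∈ S

/-- A set of box-formulas is regular if its dependency graph has no oriented cycle. -/
def RegularSet {Λ : Type u} {V : Type v} (A : Set (MF Λ V)) : Prop :=
  ∀ p : V, ¬ Relation.TransGen (depEdge A) p p

/-- `R_λ^{-1}(A) = {u : ∃ v, u R_λ v ∧ v ∈ A}`. -/
def Rinv {Λ : Type u} (F : Frame Λ) (l : Λ) (A : Set F.W) : Set F.W :=
  {u | ∃ v, F.R l u v ∧ v ∈ A}

/-- `R_λ^□(A) = {u : ∀ v, u R_λ v → v ∈ A}`. -/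
def RboxOp {Λ : Type u} (F : Frame Λ) (l : Λ) (A : Set F.W) : Set F.W :=
  {u | ∀ v, F.R l u v → v ∈ A}

/-- `R_λ(A) = {u : ∃ v, v R_λ u ∧ v ∈ A}`. -/
def Rfwd {Λ : Type u} (F : Frame Λ) (l : Λ) (A : Set F.W) : Set F.W :=
  {u | ∃ v, F.R l v u ∧ v ∈ A}

/-- The interpretation of the expression `KP^{POS}` in a frame `F`, the set variables
`P^l_i` being interpreted by `P`.  (Junk value `∅` on non-positive constructors.) -/
def KPsem {Λ : Type u} (F : Frame Λ) (P : ℕ × ℕ → Set F.W) : MF Λ (ℕ × ℕ) → Set F.W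
  | .var q => P q
  | .top => Set.univ
  | .bot => ∅
  | .and a b => KPsem F P a ∩ KPsem F P b
  | .or a b => KPsem F P a ∪ KPsem F P b
  | .dia l a => Rinv F l (KPsem F P a)
  | .box l a => RboxOp F l (KPsem F P a)
  | .neg _ => ∅
  | .imp _ _ => ∅

/-- The interpretation of the expression `KV^φ` in a frame `F`: the set variables `P^l_i`
are interpreted by `P` and the extra variable `#` by the second argument.
(Junk value `∅` on constructors that do not occur in regular box-formulas.) -/
def KVsem {Λ : Type u} (F : Frame Λ) (P : ℕ × ℕ → Set F.W) : MF Λ (ℕ × ℕ) → Set F.W → Set F.W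
  | .var _, X => X
  | .imp POS ψ, X => KVsem F P ψ (X ∩ KPsem F P POS)
  | .box l ψ, X => KVsem F P ψ (Rfwd F l X)
  | _, _ => ∅

/-- The semantic minimal valuation: given points `g j` and sets `f j` of regular
box-formulas to be verified at `g j`, `thetaMinSem F g f k i` is the minimal value of the
variable `p^k_i`; it is defined by recursion on the rank `k` as the union, over all `j` and
all `φ ∈ f j` with head `p^k_i`, of `KV^φ(g j)` computed with the minimal values of the
variables of lower rank. -/
noncomputable def thetaMinSem {Λ : Type u} (F : Frame Λ) {ι : Type w} (g : ι → F.W)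
    (f : ι → Set (MF Λ (ℕ × ℕ))) : ℕ → ℕ → Set F.W :=
  fun k => Nat.strongRecOn (motive := fun _ => ℕ → Set F.W) k fun k ih i =>
    ⋃ (j : ι), ⋃ φ ∈ f j, ⋃ (_ : RegBF Prod.fst φ (k, i)),
      KVsem F (fun q => if h : q.1 < k then ih q.1 h q.2 else ∅) φ {g j}

/-- `L`-expressions: terms of the language `L` with individual variables `x_i` (`i : ℕ`),
constants `⊤, ⊥`, unary `R_λ^{-1}`, `R_λ^□`, `R_λ` and binary `∩`, `∪`. -/
inductive LExp (Λ : Type u) : Type u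
  | var : ℕ → LExp Λ
  | top : LExp Λ
  | bot : LExp Λ
  | inter : LExp Λ → LExp Λ → LExp Λ
  | union : LExp Λ → LExp Λ → LExp Λ
  | rinv : Λ → LExp Λ → LExp Λ
  | rbox : Λ → LExp Λ → LExp Λ
  | rfw : Λ → LExp Λ → LExp Λ

namespace LExp
variable {Λ : Type u}

/-- Denotation of an `L`-expression in a frame `F`, the variable `x_i` denoting the
singleton of the point `g i`. -/
def den (F : Frame Λ) (g : ℕ → F.W) : LExp Λ → Set F.W
  | var i => {g i}
  | top => Set.univ
  | bot => ∅
  | inter a b => den F g a ∩ den F g b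
  | union a b => den F g a ∪ den F g b
  | rinv l a => Rinv F l (den F g a)
  | rbox l a => RboxOp F l (den F g a)
  | rfw l a => Rfwd F l (den F g a)

/-- The set of (indices of) individual variables occurring in an `L`-expression. -/
def evars : LExp Λ → Set ℕ
  | var i => {i}
  | top => ∅
  | bot => ∅
  | inter a b => evars a ∪ evars b
  | union a b => evars a ∪ evars b
  | rinv _ a => evars a
  | rbox _ a => evars a
  | rfw _ a => evars a

end LExp

/-- The subexpression relation on `L`-expressions. -/
inductive Subexp {Λ : Type u} : LExp Λ → LExp Λ → Prop
  | refl (e : LExp Λ) : Subexp e e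
  | interL {e a b} : Subexp e a → Subexp e (.inter a b)
  | interR {e a b} : Subexp e b → Subexp e (.inter a b)
  | unionL {e a b} : Subexp e a → Subexp e (.union a b)
  | unionR {e a b} : Subexp e b → Subexp e (.union a b)
  | rinv (l) {e a} : Subexp e a → Subexp e (.rinv l a)
  | rbox (l) {e a} : Subexp e a → Subexp e (.rbox l a)
  | rfw (l) {e a} : Subexp e a → Subexp e (.rfw l a)

/-- `SafeFor e`: `e` is "safe for" the ambient expression, i.e. `e` is a variable, or
`R_λ(e')` with `e'` safe for it, or an intersection one of whose components is safe for it. -/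
inductive SafeFor {Λ : Type u} : LExp Λ → Prop
  | var (i : ℕ) : SafeFor (.var i)
  | rfw (l) {a} : SafeFor a → SafeFor (.rfw l a)
  | interL {a b} : SafeFor a → SafeFor (.inter a b)
  | interR {a b} : SafeFor b → SafeFor (.inter a b)

/-- An `L`-expression is safe if it is safe for itself and the argument of every
subexpression of the form `R_λ(ψ)` is safe for it. -/
def Safe {Λ : Type u} (e : LExp Λ) : Prop :=
  SafeFor e ∧ ∀ l a, Subexp (.rfw l a) e → SafeFor a

mutual
  /-- The class `K`: the least class of `L`-expressions containing the variables and closed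
  under `S ↦ R_λ(S)` and `S ↦ S ∩ E` for `E` a positive combination of members of `K`. -/
  inductive InK {Λ : Type u} : LExp Λ → Prop
    | var (i : ℕ) : InK (.var i)
    | rfw (l : Λ) {S : LExp Λ} : InK S → InK (.rfw l S)
    | inter {S E : LExp Λ} : InK S → PosOfK E → InK (.inter S E)
  /-- Positive combinations of members of `K`: built from members of `K` using only
  `∩`, `∪`, `R_λ^{-1}`, `R_λ^□`, `⊤`, `⊥`. -/
  inductive PosOfK {Λ : Type u} : LExp Λ → Prop
    | ofK {e : LExp Λ} : InK e → PosOfK e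
    | top : PosOfK .top
    | bot : PosOfK .bot
    | inter {a b} : PosOfK a → PosOfK b → PosOfK (.inter a b)
    | union {a b} : PosOfK a → PosOfK b → PosOfK (.union a b)
    | rinv (l) {a} : PosOfK a → PosOfK (.rinv l a)
    | rbox (l) {a} : PosOfK a → PosOfK (.rbox l a)
end

/-- Quasi-safe `L`-expressions: positive combinations of safe expressions, i.e. built from
safe expressions using only `∩`, `∪`, `R_λ^{-1}`, `R_λ^□`, `⊤`, `⊥`. -/
inductive QuasiSafe {Λ : Type u} : LExp Λ → Prop
  | safe {e : LExp Λ} : Safe e → QuasiSafe e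
  | top : QuasiSafe .top
  | bot : QuasiSafe .bot
  | inter {a b} : QuasiSafe a → QuasiSafe b → QuasiSafe (.inter a b)
  | union {a b} : QuasiSafe a → QuasiSafe b → QuasiSafe (.union a b)
  | rinv (l) {a} : QuasiSafe a → QuasiSafe (.rinv l a)
  | rbox (l) {a} : QuasiSafe a → QuasiSafe (.rbox l a)

/-- `ReplOne i ψ φ φ'`: `φ'` is the result of replacing one occurrence of the variable
`x_i` in `φ` by `ψ`. -/
inductive ReplOne {Λ : Type u} (i : ℕ) (ψ : LExp Λ) : LExp Λ → LExp Λ → Prop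
  | here : ReplOne i ψ (.var i) ψ
  | interL {a a' b} : ReplOne i ψ a a' → ReplOne i ψ (.inter a b) (.inter a' b)
  | interR {a b b'} : ReplOne i ψ b b' → ReplOne i ψ (.inter a b) (.inter a b')
  | unionL {a a' b} : ReplOne i ψ a a' → ReplOne i ψ (.union a b) (.union a' b)
  | unionR {a b b'} : ReplOne i ψ b b' → ReplOne i ψ (.union a b) (.union a b')
  | rinv (l) {a a'} : ReplOne i ψ a a' → ReplOne i ψ (.rinv l a) (.rinv l a')
  | rbox (l) {a a'} : ReplOne i ψ a a' → ReplOne i ψ (.rbox l a) (.rbox l a')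
  | rfw (l) {a a'} : ReplOne i ψ a a' → ReplOne i ψ (.rfw l a) (.rfw l a')

/-- A finite union of `L`-expressions (empty union is `⊥`). -/
def unionList {Λ : Type u} : List (LExp Λ) → LExp Λ
  | [] => .bot
  | e :: es => .union e (unionList es)

/-- `UnionOfSafe e`: `e` is a finite union of safe expressions. -/
inductive UnionOfSafe {Λ : Type u} : LExp Λ → Prop
  | bot : UnionOfSafe .bot
  | safe {e : LExp Λ} : Safe e → UnionOfSafe e
  | union {a b} : UnionOfSafe a → UnionOfSafe b → UnionOfSafe (.union a b)

/-- Syntactic `KP^{POS}`: the `L`-expression obtained from the positive formula `POS` by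
replacing each set variable `P^l_i` by the `L`-expression `KF (l, i)`.
(Junk value on non-positive constructors.) -/
def KPsub {Λ : Type u} (KF : ℕ × ℕ → LExp Λ) : MF Λ (ℕ × ℕ) → LExp Λ
  | .var q => KF q
  | .top => .top
  | .bot => .bot
  | .and a b => .inter (KPsub KF a) (KPsub KF b)
  | .or a b => .union (KPsub KF a) (KPsub KF b)
  | .dia l a => .rinv l (KPsub KF a)
  | .box l a => .rbox l (KPsub KF a)
  | .neg _ => .bot
  | .imp _ _ => .bot

/-- Syntactic `KVF^φ(t)`: the `L`-expression obtained from `KV^φ` by substituting the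
`L`-expression `t` for `#` and `KF (l, i)` for each set variable `P^l_i`.
(Junk value on constructors that do not occur in regular box-formulas.) -/
def KVFsyn {Λ : Type u} (KF : ℕ × ℕ → LExp Λ) : MF Λ (ℕ × ℕ) → LExp Λ → LExp Λ
  | .var _, t => t
  | .imp POS ψ, t => KVFsyn KF ψ (.inter t (KPsub KF POS))
  | .box l ψ, t => KVFsyn KF ψ (.rfw l t)
  | _, _ => .bot

open scoped Classical in
/-- The syntactic minimal valuation `KF_f^{p^k_i}` for variables `x_0, …, x_{n-1}` and
`f` assigning to each variable a finite set of regular box-formulas: defined by recursion on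
the rank `k` as the union, over all `j < n` and all `φ ∈ f j` with head `p^k_i`, of
`KVF_f^φ(x_j)`, which is `KV^φ` with `x_j` substituted for `#` and `KF_f^{p^l_m}`
substituted for each `P^l_m` with `l < k`. -/
noncomputable def KFsyn {Λ : Type u} (n : ℕ) (f : ℕ → Finset (MF Λ (ℕ × ℕ))) :
    ℕ → ℕ → LExp Λ :=
  fun k => Nat.strongRecOn (motive := fun _ => ℕ → LExp Λ) k fun k ih i =>
    unionList (((List.range n).flatMap fun j =>
      ((f j).toList.filter fun φ => decide (RegBF Prod.fst φ (k, i))).map fun φ =>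
        KVFsyn (fun q => if h : q.1 < k then ih q.1 h q.2 else LExp.bot) φ (LExp.var j)))

/-- The expressions substituted for the set variables `P^l_m`, `l < k`, in `KVF`:
the syntactic minimal valuations of the lower ranks. -/
noncomputable def lowKF {Λ : Type u} (n : ℕ) (f : ℕ → Finset (MF Λ (ℕ × ℕ))) (k : ℕ) :
    ℕ × ℕ → LExp Λ :=
  fun q => if q.1 < k then KFsyn n f q.1 q.2 else LExp.bot

/-- `KVFat n f φ j k` is the `L`-expression `KVF_f^φ(x_j)` for `φ` a regular box-formula
of rank `k`. -/
noncomputable def KVFat {Λ : Type u} (n : ℕ) (f : ℕ → Finset (MF Λ (ℕ × ℕ)))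
    (φ : MF Λ (ℕ × ℕ)) (j k : ℕ) : LExp Λ :=
  KVFsyn (lowKF n f k) φ (.var j)

/-- A labelled tree-like structure: a set of vertices with relations indexed by `Λ`,
a root, and a label function assigning to every vertex a set of labels from `α`. -/
structure LabTree (Λ : Type u) (α : Type v) where
  V : Type
  R : Λ → V → V → Prop
  root : V
  label : V → Set α

/-- Derivation trees witnessing that a formula is built from base formulas using only
`∧` and `◇_λ`. -/
inductive BuiltT (Λ : Type u) (V : Type v) : Type (max u v)
  | base : MF Λ V → BuiltT Λ V
  | and : BuiltT Λ V → BuiltT Λ V → BuiltT Λ V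
  | dia : Λ → BuiltT Λ V → BuiltT Λ V

/-- The modal formula described by a derivation tree. -/
def BuiltT.formula {Λ : Type u} {V : Type v} : BuiltT Λ V → MF Λ V
  | base φ => φ
  | and a b => .and a.formula b.formula
  | dia l a => .dia l a.formula

/-- The derivation tree uses only base formulas from `A`. -/
def BuiltT.Ok {Λ : Type u} {V : Type v} (A : Set (MF Λ V)) : BuiltT Λ V → Prop
  | base φ => φ ∈ A
  | and a b => a.Ok A ∧ b.Ok A
  | dia _ a => a.Ok A

/-- Helper for gluing two labelled trees at their roots: the relation on the disjoint sum,
with the edges out of the second root re-attached to the first root. -/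
def glueR {Λ : Type u} {W₁ W₂ : Type} (R₁ : Λ → W₁ → W₁ → Prop) (R₂ : Λ → W₂ → W₂ → Prop)
    (r₁ : W₁) (r₂ : W₂) (l : Λ) : W₁ ⊕ W₂ → W₁ ⊕ W₂ → Prop
  | Sum.inl a, Sum.inl b => R₁ l a b
  | Sum.inr a, Sum.inr b => R₂ l a b
  | Sum.inl a, Sum.inr b => a = r₁ ∧ R₂ l r₂ b
  | Sum.inr _, Sum.inl _ => False

open Classical in
/-- Helper for gluing two labelled trees at their roots: the label function, the glued root
receiving the union of the two root labels. -/
noncomputable def glueLab {α : Type w} {W₁ W₂ : Type} (L₁ : W₁ → Set α) (L₂ : W₂ → Set α)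
    (r₁ : W₁) (r₂ : W₂) : W₁ ⊕ W₂ → Set α
  | Sum.inl a => if a = r₁ then L₁ r₁ ∪ L₂ r₂ else L₁ a
  | Sum.inr b => L₂ b

/-- Helper for prefixing a labelled tree with a new root: the relation on `Option W`,
with an `R_{l₀}`-edge from the new root `none` to the old root `r`. -/
def prefR {Λ : Type u} {W : Type} (R : Λ → W → W → Prop) (l₀ : Λ) (r : W) (l : Λ) :
    Option W → Option W → Prop
  | none, some w => l = l₀ ∧ w = r
  | some a, some b => R l a b
  | _, _ => False

/-- Helper for prefixing a labelled tree with a new root: the label function, the new root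
getting the empty label. -/
def prefLab {α : Type w} {W : Type} (L : W → Set α) : Option W → Set α
  | none => ∅
  | some a => L a

/-- The reduced syntactical tree of a formula built from base formulas using `∧` and `◇_λ`:
a single root labelled `{a}` for a base formula `a`; for a conjunction, the two trees
with their roots identified (labels united); for `◇_λ ψ`, a new root with empty label and an
`R_λ`-edge to the root of the tree of `ψ`. -/
noncomputable def TreeOf {Λ : Type u} {V : Type v} : BuiltT Λ V → LabTree Λ (MF Λ V)
  | .base φ =>
      { V := Unit, R := fun _ _ _ => False, root := (), label := fun _ => {φ} }
  | .and b₁ b₂ =>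
      let T₁ := TreeOf b₁
      let T₂ := TreeOf b₂
      { V := {v : T₁.V ⊕ T₂.V // v ≠ Sum.inr T₂.root},
        R := fun l u v => glueR T₁.R T₂.R T₁.root T₂.root l u.1 v.1,
        root := ⟨Sum.inl T₁.root, by exact Sum.inl_ne_inr⟩,
        label := fun v => glueLab T₁.label T₂.label T₁.root T₂.root v.1 }
  | .dia l b =>
      let T := TreeOf b
      { V := Option T.V,
        R := fun l' u v => prefR T.R l T.root l' u v,
        root := none,
        label := fun v => prefLab T.label v }

/-- Restrictedly positive first-order formulas over the frame language: built from atoms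
`y ∈ E` (`E` an `L`-expression) using `∧`, `∨` and the restricted quantifiers
`(∀ y ◁_λ x)` and `(∃ y ◁_λ x)`. -/
inductive KrF (Λ : Type u) : Type u
  | atom : ℕ → LExp Λ → KrF Λ
  | and : KrF Λ → KrF Λ → KrF Λ
  | or : KrF Λ → KrF Λ → KrF Λ
  | all : ℕ → Λ → ℕ → KrF Λ → KrF Λ
  | ex : ℕ → Λ → ℕ → KrF Λ → KrF Λ

namespace KrF
variable {Λ : Type u}

/-- Truth of a restrictedly positive formula in a frame under an assignment `g` of points to
individual variables; the atom `y ∈ E` is read via the `#`-translation, i.e. as membership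
of `g y` in the denotation of `E`. -/
def holds (F : Frame Λ) : (ℕ → F.W) → KrF Λ → Prop
  | g, atom y E => g y ∈ E.den F g
  | g, and a b => holds F g a ∧ holds F g b
  | g, or a b => holds F g a ∨ holds F g b
  | g, all y l x β => ∀ w, F.R l (g x) w → holds F (Function.update g y w) β
  | g, ex y l x β => ∃ w, F.R l (g x) w ∧ holds F (Function.update g y w) β

/-- Free variables. -/
def fv : KrF Λ → Set ℕ
  | atom y E => insert y E.evars
  | and a b => fv a ∪ fv b
  | or a b => fv a ∪ fv b
  | all y _ x β => insert x (fv β \ {y})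
  | ex y _ x β => insert x (fv β \ {y})

/-- Bound variables. -/
def bv : KrF Λ → Set ℕ
  | atom _ _ => ∅
  | and a b => bv a ∪ bv b
  | or a b => bv a ∪ bv b
  | all y _ _ β => insert y (bv β)
  | ex y _ _ β => insert y (bv β)

/-- No two distinct quantifier occurrences bind the same variable. -/
def CleanBound : KrF Λ → Prop
  | atom _ _ => True
  | and a b => CleanBound a ∧ CleanBound b ∧ bv a ∩ bv b = ∅
  | or a b => CleanBound a ∧ CleanBound b ∧ bv a ∩ bv b = ∅
  | all y _ _ β => CleanBound β ∧ y ∉ bv β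
  | ex y _ _ β => CleanBound β ∧ y ∉ bv β

/-- Clean formulas: no variable occurs both free and bound, and no two distinct quantifier
occurrences bind the same variable. -/
def Clean (φ : KrF Λ) : Prop := fv φ ∩ bv φ = ∅ ∧ CleanBound φ

/-- All the `L`-expressions occurring in atoms of the formula satisfy `P`. -/
def AtomsAll (P : LExp Λ → Prop) : KrF Λ → Prop
  | atom _ E => P E
  | and a b => AtomsAll P a ∧ AtomsAll P b
  | or a b => AtomsAll P a ∧ AtomsAll P b
  | all _ _ _ β => AtomsAll P β
  | ex _ _ _ β => AtomsAll P β

/-- Quantifier-free formulas (built from atoms using only `∧` and `∨`). -/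
def QFree : KrF Λ → Prop
  | atom _ _ => True
  | and a b => QFree a ∧ QFree b
  | or a b => QFree a ∧ QFree b
  | all _ _ _ _ => False
  | ex _ _ _ _ => False

/-- Formulas built from atoms using only `∧`, `∨` and restricted universal quantification
(no existential quantifier). -/
def NoEx : KrF Λ → Prop
  | atom _ _ => True
  | and a b => NoEx a ∧ NoEx b
  | or a b => NoEx a ∧ NoEx b
  | all _ _ _ β => NoEx β
  | ex _ _ _ _ => False

/-- `GKok U e φ`: every variable occurring in an `L`-expression of an atom of `φ` is
inherently universal. Here `U` is the set of variables that are inherently universal so far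
(initially the free variables) and `e` records whether we are within the scope of an
existential quantifier. -/
def GKok : Set ℕ → Bool → KrF Λ → Prop
  | U, _, atom _ E => E.evars ⊆ U
  | U, e, and a b => GKok U e a ∧ GKok U e b
  | U, e, or a b => GKok U e a ∧ GKok U e b
  | U, false, all y _ _ β => GKok (insert y U) false β
  | U, true, all _ _ _ β => GKok U true β
  | U, _, ex _ _ _ β => GKok U true β

end KrF

/-- A generalized Kracht formula with free variables: clean, restrictedly positive with safe
atoms, and in every atom `y ∈ E` all variables of `E` are inherently universal. -/
def IsGenKrachtFV {Λ : Type u} (α : KrF Λ) : Prop :=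
  α.Clean ∧ α.AtomsAll Safe ∧ α.GKok α.fv false

/-- A generalized Kracht formula: a generalized Kracht formula with free variables whose
only free variable is `x0`. -/
def IsGenKracht {Λ : Type u} (α : KrF Λ) (x0 : ℕ) : Prop :=
  IsGenKrachtFV α ∧ α.fv = {x0}

/-- Generalized Sahlqvist antecedents: built from regular box-formulas and negative
formulas using only `∧`, `∨`, `◇_λ`. -/
inductive GSAnt {Λ : Type u} : MF Λ (ℕ × ℕ) → Prop
  | reg {φ p} : RegBF Prod.fst φ p → GSAnt φ
  | neg {φ} : Positive φ → GSAnt (.neg φ)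
  | and {a b} : GSAnt a → GSAnt b → GSAnt (.and a b)
  | or {a b} : GSAnt a → GSAnt b → GSAnt (.or a b)
  | dia (l) {a} : GSAnt a → GSAnt (.dia l a)

/-- Generalized Sahlqvist formulas: built from generalized Sahlqvist implications
`GSA → ⊥` by applying boxes and conjunctions, and disjunctions only to formulas without
common propositional variables. -/
inductive GSF {Λ : Type u} : MF Λ (ℕ × ℕ) → Prop
  | impl {a} : GSAnt a → GSF (.imp a .bot)
  | box (l) {a} : GSF a → GSF (.box l a)
  | and {a b} : GSF a → GSF b → GSF (.and a b)
  | or {a b} : GSF a → GSF b → MF.vars a ∩ MF.vars b = ∅ → GSF (.or a b)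

open Classical in
/-- The modal translation `E^T` of a quasi-safe expression: safe subexpressions are
replaced by their associated propositional variables `p_E`, and `∩, ∪, R^{-1}_λ, R^□_λ`
become `∧, ∨, ◇_λ, □_λ`. -/
noncomputable def Etrans {Λ : Type u} (pE : LExp Λ → ℕ × ℕ) : LExp Λ → MF Λ (ℕ × ℕ)
  | .var i => .var (pE (.var i))
  | .top => .top
  | .bot => .bot
  | .inter a b =>
      if Safe (LExp.inter a b) then .var (pE (.inter a b))
      else .and (Etrans pE a) (Etrans pE b)
  | .union a b =>
      if Safe (LExp.union a b) then .var (pE (.union a b))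
      else .or (Etrans pE a) (Etrans pE b)
  | .rinv l a =>
      if Safe (LExp.rinv l a) then .var (pE (.rinv l a)) else .dia l (Etrans pE a)
  | .rbox l a =>
      if Safe (LExp.rbox l a) then .var (pE (.rbox l a)) else .box l (Etrans pE a)
  | .rfw l a => if Safe (LExp.rfw l a) then .var (pE (.rfw l a)) else .bot

/-- A finite disjunction of modal formulas (empty disjunction is `⊥`). -/
def orList {Λ : Type u} {V : Type v} : List (MF Λ V) → MF Λ V
  | [] => .bot
  | a :: as => .or a (orList as)

section Proof12

variable {Λ : Type u}

private theorem myStrongRec_eq {C : ℕ → Sort*} (ind : ∀ n, (∀ m, m < n → C m) → C n) (t : ℕ) :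
    Nat.strongRecOn t ind = ind t fun m _ => Nat.strongRecOn m ind := by
  unfold Nat.strongRecOn; exact WellFounded.fix_eq _ _ _

theorem thetaMinSem_eq {ι : Type w} (F : Frame Λ) (g : ι → F.W)
    (f : ι → Set (MF Λ (ℕ × ℕ))) (k i : ℕ) :
    thetaMinSem F g f k i =
      ⋃ (j : ι), ⋃ φ ∈ f j, ⋃ (_ : RegBF Prod.fst φ (k, i)),
        KVsem F (fun q => if _ : q.1 < k then thetaMinSem F g f q.1 q.2 else ∅) φ {g j} := by
  unfold thetaMinSem; exact congrFun (myStrongRec_eq (C := fun _ => ℕ → Set F.W) _ k) i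

variable {F : Frame Λ}

theorem satPos_mono {V' : Type v} {θ₁ θ₂ : V' → Set F.W} (hθ : ∀ q, θ₁ q ⊆ θ₂ q) :
    ∀ {a : MF Λ V'}, Positive a → ∀ x, sat F θ₁ x a → sat F θ₂ x a := by
  intro a ha
  induction ha with
  | var p => exact fun x hx => hθ p hx
  | top => exact fun x _ => trivial
  | bot => exact fun x h => h.elim
  | and h1 h2 ih1 ih2 => exact fun x h => ⟨ih1 x h.1, ih2 x h.2⟩
  | or h1 h2 ih1 ih2 =>
      exact fun x h => h.elim (fun h => Or.inl (ih1 x h)) (fun h => Or.inr (ih2 x h))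
  | dia l h ih => rintro x ⟨y, hR, hy⟩; exact ⟨y, hR, ih y hy⟩
  | box l h ih => exact fun x h y hR => ih y (h y hR)

theorem KPsem_eq_sat {θ : ℕ × ℕ → Set F.W} :
    ∀ {a : MF Λ (ℕ × ℕ)}, Positive a → KPsem F θ a = {w | sat F θ w a} := by
  intro a ha
  induction ha with
  | var p => rfl
  | top => ext w; simp [KPsem, sat]
  | bot => ext w; simp [KPsem, sat]
  | and h1 h2 ih1 ih2 => ext w; simp only [KPsem, Set.mem_inter_iff, ih1, ih2]; rfl
  | or h1 h2 ih1 ih2 => ext w; simp only [KPsem, Set.mem_union, ih1, ih2]; rfl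
  | dia l h ih => ext w; simp only [KPsem, Rinv, ih, Set.mem_setOf_eq]; rfl
  | box l h ih => ext w; simp only [KPsem, RboxOp, ih, Set.mem_setOf_eq]; rfl

theorem KPsem_congr {P Q : ℕ × ℕ → Set F.W} :
    ∀ {a : MF Λ (ℕ × ℕ)}, Positive a → (∀ q ∈ MF.vars a, P q = Q q) →
      KPsem F P a = KPsem F Q a := by
  intro a ha
  induction ha with
  | var p => intro h; exact h p rfl
  | top => intro _; rfl
  | bot => intro _; rfl
  | and h1 h2 ih1 ih2 =>
      intro h
      show KPsem F P _ ∩ KPsem F P _ = _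
      rw [ih1 (fun q hq => h q (Or.inl hq)), ih2 (fun q hq => h q (Or.inr hq))]; rfl
  | or h1 h2 ih1 ih2 =>
      intro h
      show KPsem F P _ ∪ KPsem F P _ = _
      rw [ih1 (fun q hq => h q (Or.inl hq)), ih2 (fun q hq => h q (Or.inr hq))]; rfl
  | dia l h ih => intro hv; show Rinv F l _ = Rinv F l _; rw [ih hv]
  | box l h ih => intro hv; show RboxOp F l _ = RboxOp F l _; rw [ih hv]

theorem KPsem_mono {P Q : ℕ × ℕ → Set F.W} (hPQ : ∀ q, P q ⊆ Q q) :
    ∀ {a : MF Λ (ℕ × ℕ)}, Positive a → KPsem F P a ⊆ KPsem F Q a := by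
  intro a ha
  induction ha with
  | var p => exact hPQ p
  | top => exact subset_rfl
  | bot => exact subset_rfl
  | and h1 h2 ih1 ih2 => exact Set.inter_subset_inter ih1 ih2
  | or h1 h2 ih1 ih2 => exact Set.union_subset_union ih1 ih2
  | dia l h ih => rintro w ⟨v, hR, hv⟩; exact ⟨v, hR, ih hv⟩
  | box l h ih => intro w hw v hR; exact ih (hw v hR)

theorem KVsem_min {r : ℕ × ℕ → ℕ} {φ : MF Λ (ℕ × ℕ)} {p : ℕ × ℕ}
    (hφ : RegBF r φ p) {θ P : ℕ × ℕ → Set F.W} (hP : ∀ q, P q ⊆ θ q) :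
    ∀ X : Set F.W, (∀ w ∈ X, sat F θ w φ) → KVsem F P φ X ⊆ θ p := by
  induction hφ with
  | var p => exact fun X hX w hw => hX w hw
  | imp hPOS hrank hψ ih =>
      intro X hX
      refine ih _ ?_
      rintro w ⟨hwX, hwP⟩
      refine hX w hwX ?_
      have h1 := KPsem_mono hP hPOS hwP
      rw [KPsem_eq_sat hPOS] at h1
      exact h1
  | box l hψ ih =>
      intro X hX
      refine ih _ ?_
      rintro w ⟨u, hR, huX⟩
      exact hX u huX w hR

theorem KVsem_max {φ : MF Λ (ℕ × ℕ)} {p : ℕ × ℕ}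
    (hφ : RegBF Prod.fst φ p) {θ P : ℕ × ℕ → Set F.W}
    (hP : ∀ q : ℕ × ℕ, q.1 < p.1 → P q = θ q) :
    ∀ X : Set F.W, KVsem F P φ X ⊆ θ p → ∀ w ∈ X, sat F θ w φ := by
  induction hφ with
  | var p => exact fun X hX w hw => hX hw
  | imp hPOS hrank hψ ih =>
      intro X hX w hw hsat
      refine ih hP _ hX w ⟨hw, ?_⟩
      rw [KPsem_congr hPOS (fun q hq => hP q (hrank q hq)), KPsem_eq_sat hPOS]
      exact hsat
  | box l hψ ih =>
      intro X hX w hw y hR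
      exact ih hP _ hX y ⟨w, hR, hw⟩

theorem thetaMin_le {ι : Type w} (g : ι → F.W) (f : ι → Set (MF Λ (ℕ × ℕ)))
    (θ : ℕ × ℕ → Set F.W)
    (hsat : ∀ j, ∀ φ ∈ f j, ∀ p : ℕ × ℕ, RegBF Prod.fst φ p → sat F θ (g j) φ) :
    ∀ k i, thetaMinSem F g f k i ⊆ θ (k, i) := by
  intro k
  induction k using Nat.strong_induction_on with
  | _ k ih =>
    intro i
    rw [thetaMinSem_eq]
    refine Set.iUnion_subset fun j => Set.iUnion_subset fun φ => Set.iUnion_subset fun hφ =>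
      Set.iUnion_subset fun hreg => ?_
    refine KVsem_min hreg ?_ _ ?_
    · intro q
      by_cases hq : q.1 < k
      · simp only [dif_pos hq]
        intro w hw
        have := ih q.1 hq q.2 hw
        rwa [Prod.mk.eta] at this
      · simp only [dif_neg hq]; exact Set.empty_subset _
    · rintro w rfl
      exact hsat j φ hφ _ hreg

theorem thetaMin_sat {ι : Type w} (g : ι → F.W) (f : ι → Set (MF Λ (ℕ × ℕ)))
    (j : ι) (φ : MF Λ (ℕ × ℕ)) (hφ : φ ∈ f j) (p : ℕ × ℕ)
    (hreg : RegBF Prod.fst φ p) :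
    sat F (fun q => thetaMinSem F g f q.1 q.2) (g j) φ := by
  obtain ⟨k, i⟩ := p
  refine KVsem_max hreg
    (P := fun q => if _ : q.1 < k then thetaMinSem F g f q.1 q.2 else ∅)
    (fun q hq => dif_pos hq) {g j} ?_ _ rfl
  intro w hw
  show w ∈ thetaMinSem F g f k i
  rw [thetaMinSem_eq]
  exact Set.mem_iUnion.2 ⟨j, Set.mem_iUnion.2 ⟨φ, Set.mem_iUnion.2 ⟨hφ,
    Set.mem_iUnion.2 ⟨hreg, hw⟩⟩⟩⟩

end Proof12
section Trees
variable {Λ : Type u} {V' : Type v}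

theorem no_edge_root : ∀ (b : BuiltT Λ V') (l : Λ) (u : (TreeOf b).V),
    ¬ (TreeOf b).R l u (TreeOf b).root := by
  intro b
  induction b with
  | base φ => intro l u h; exact h
  | and b1 b2 ih1 ih2 =>
      rintro l ⟨u1 | u1, hu⟩ h
      · exact ih1 l u1 h
      · exact h
  | dia l0 b ih =>
      rintro l (_ | u) h <;> exact h

theorem label_ok (A : Set (MF Λ V')) :
    ∀ b : BuiltT Λ V', b.Ok A → ∀ (v : (TreeOf b).V) (ψ), ψ ∈ (TreeOf b).label v → ψ ∈ A := by
  intro b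
  induction b with
  | base φ =>
      intro hOk v ψ hψ
      have hψ' : ψ = φ := hψ
      subst hψ'; exact hOk
  | and b1 b2 ih1 ih2 =>
      rintro ⟨h1, h2⟩ ⟨v1 | v1, hv⟩ ψ hψ
      · show ψ ∈ A
        change ψ ∈ glueLab (TreeOf b1).label (TreeOf b2).label (TreeOf b1).root (TreeOf b2).root (Sum.inl v1) at hψ
        simp only [glueLab] at hψ
        split at hψ
        · rcases hψ with hψ | hψ
          · exact ih1 h1 _ ψ hψ
          · exact ih2 h2 _ ψ hψ
        · exact ih1 h1 _ ψ hψ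
      · exact ih2 h2 _ ψ hψ
  | dia l0 b ih =>
      rintro hOk (_ | v) ψ hψ
      · exact hψ.elim
      · exact ih hOk _ ψ hψ

theorem tree_sat_iff {Λ : Type u} {V' : Type v} (F : Frame Λ) (θ : V' → Set F.W) :
    ∀ (b : BuiltT Λ V') (w : F.W),
    sat F θ w b.formula ↔
      ∃ h : (TreeOf b).V → F.W, h (TreeOf b).root = w ∧
        (∀ l u v, (TreeOf b).R l u v → F.R l (h u) (h v)) ∧
        ∀ (v : (TreeOf b).V) (ψ), ψ ∈ (TreeOf b).label v → sat F θ (h v) ψ := by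
  intro b
  induction b with
  | base φ =>
      intro w
      constructor
      · intro hs
        refine ⟨fun _ => w, rfl, fun l u v h => h.elim, fun v ψ hψ => ?_⟩
        have hψ' : ψ = φ := hψ
        subst hψ'; exact hs
      · rintro ⟨h, hroot, -, hlab⟩
        have := hlab (TreeOf (BuiltT.base φ)).root φ rfl
        rwa [hroot] at this
  | and b1 b2 ih1 ih2 =>
      intro w
      constructor
      · rintro ⟨hs1, hs2⟩
        obtain ⟨h1, hr1, he1, hl1⟩ := (ih1 w).1 hs1
        obtain ⟨h2, hr2, he2, hl2⟩ := (ih2 w).1 hs2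
        refine ⟨fun v => Sum.elim h1 h2 v.1, hr1, ?_, ?_⟩
        · rintro l ⟨u1 | u1, hu⟩ ⟨v1 | v1, hv⟩ h
          · exact he1 l u1 v1 h
          · obtain ⟨rfl, h2'⟩ := h
            show F.R l (h1 (TreeOf b1).root) (h2 v1)
            rw [hr1, ← hr2]
            exact he2 l _ v1 h2'
          · exact h.elim
          · exact he2 l u1 v1 h
        · rintro ⟨v1 | v1, hv⟩ ψ hψ
          · change ψ ∈ glueLab _ _ _ _ (Sum.inl v1) at hψ
            simp only [glueLab] at hψ
            split at hψ
            · rename_i hv1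
              rcases hψ with hψ | hψ
              · show sat F θ (h1 v1) ψ
                rw [hv1]; exact hl1 _ ψ hψ
              · show sat F θ (h1 v1) ψ
                rw [hv1, hr1, ← hr2]; exact hl2 _ ψ hψ
            · exact hl1 v1 ψ hψ
          · exact hl2 v1 ψ hψ
      · rintro ⟨h, hroot, hedge, hlab⟩
        classical
        have hne : ∀ v1 : (TreeOf b1).V,
            (Sum.inl v1 : (TreeOf b1).V ⊕ (TreeOf b2).V) ≠ Sum.inr (TreeOf b2).root :=
          fun _ => Sum.inl_ne_inr
        set h1 : (TreeOf b1).V → F.W := fun a => h ⟨Sum.inl a, hne a⟩ with hh1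
        set h2 : (TreeOf b2).V → F.W := fun a =>
          if ha : a = (TreeOf b2).root then w
          else h ⟨Sum.inr a, fun hc => ha (by injection hc)⟩ with hh2
        constructor
        · refine (ih1 w).2 ⟨h1, ?_, ?_, ?_⟩
          · exact hroot
          · intro l u v hR
            exact hedge l ⟨Sum.inl u, hne u⟩ ⟨Sum.inl v, hne v⟩ hR
          · intro v ψ hψ
            refine hlab ⟨Sum.inl v, hne v⟩ ψ ?_
            change ψ ∈ glueLab _ _ _ _ (Sum.inl v)
            simp only [glueLab]
            split
            · rename_i hv; rw [hv] at hψ; exact Or.inl hψ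
            · exact hψ
        · refine (ih2 w).2 ⟨h2, ?_, ?_, ?_⟩
          · simp [hh2]
          · intro l u v hR
            have hvne : v ≠ (TreeOf b2).root := fun hc => no_edge_root b2 l u (hc ▸ hR)
            have hv2 : h2 v = h ⟨Sum.inr v, fun hc => hvne (by injection hc)⟩ := dif_neg hvne
            by_cases hu : u = (TreeOf b2).root
            · subst hu
              have := hedge l ⟨Sum.inl (TreeOf b1).root, hne _⟩
                ⟨Sum.inr v, fun hc => hvne (by injection hc)⟩ ⟨rfl, hR⟩
              have h2u : h2 (TreeOf b2).root = w := dif_pos rfl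
              rw [hv2, h2u, ← hroot]
              exact this
            · have := hedge l ⟨Sum.inr u, fun hc => hu (by injection hc)⟩
                ⟨Sum.inr v, fun hc => hvne (by injection hc)⟩ hR
              rw [hv2]
              have h2u : h2 u = h ⟨Sum.inr u, fun hc => hu (by injection hc)⟩ := dif_neg hu
              rw [h2u]; exact this
          · intro v ψ hψ
            by_cases hv : v = (TreeOf b2).root
            · subst hv
              have h2v : h2 (TreeOf b2).root = w := dif_pos rfl
              rw [h2v, ← hroot]
              refine hlab _ ψ ?_
              change ψ ∈ glueLab _ _ _ _ (Sum.inl (TreeOf b1).root)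
              simp only [glueLab]
              rw [if_pos trivial]
              exact Or.inr hψ
            · have h2v : h2 v = h ⟨Sum.inr v, fun hc => hv (by injection hc)⟩ := dif_neg hv
              rw [h2v]
              exact hlab _ ψ hψ
  | dia l0 b ih =>
      intro w
      constructor
      · rintro ⟨u, hRu, hsatu⟩
        obtain ⟨h, hroot, hedge, hlab⟩ := (ih u).1 hsatu
        refine ⟨fun o => o.elim w h, rfl, ?_, ?_⟩
        · rintro l (_ | u1) (_ | v1) hR
          · exact hR.elim
          · obtain ⟨rfl, rfl⟩ := hR
            show F.R l w (h (TreeOf b).root)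
            rwa [hroot]
          · exact hR.elim
          · exact hedge l u1 v1 hR
        · rintro (_ | v1) ψ hψ
          · exact hψ.elim
          · exact hlab v1 ψ hψ
      · rintro ⟨h, hroot, hedge, hlab⟩
        refine ⟨h (some (TreeOf b).root), ?_, ?_⟩
        · have := hedge l0 none (some (TreeOf b).root) ⟨rfl, rfl⟩
          have hr : h none = w := hroot
          rwa [hr] at this
        · refine (ih _).2 ⟨fun a => h (some a), rfl, ?_, ?_⟩
          · intro l u v hR
            exact hedge l (some u) (some v) hR
          · intro v ψ hψ
            exact hlab (some v) ψ hψ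

end Trees
/-- second-order quantifier elimination for simple generalized Sahlqvist
implications: a simple generalized Sahlqvist implication `GSA → ⊥`, whose antecedent is
built using only `∧` and `◇_λ` from regular box-formulas and negative formulas and has
reduced syntactical tree `T`, locally corresponds to the first-order formula
`∀ x_1 … x_n (⋀ edges → ⋁_j ⋁_{ψ ∈ f_NEG(y_j)} (x_j ⊨ ¬ψ)*)`, where in `(·)*` the
variables are interpreted by the minimal valuation determined by the regular box-formulas
in the labels. -/
theorem statement12 {Λ : Type u}
    (A : Set (MF Λ (ℕ × ℕ)))
    (hA : A = {φ | (∃ p : ℕ × ℕ, RegBF Prod.fst φ p) ∨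
                   ∃ χ, Positive χ ∧ φ = MF.neg χ})
    (b : BuiltT Λ (ℕ × ℕ)) (hb : b.Ok A)
    (F : Frame Λ) (w₀ : F.W) :
    (∀ θ : ℕ × ℕ → Set F.W, sat F θ w₀ (MF.imp b.formula MF.bot)) ↔
      ∀ h : (TreeOf b).V → F.W, h (TreeOf b).root = w₀ →
        (∀ l u v, (TreeOf b).R l u v → F.R l (h u) (h v)) →
        ∃ v ψ, ψ ∈ (TreeOf b).label v ∧ (∃ χ, Positive χ ∧ ψ = MF.neg χ) ∧
          sat F
            (fun q => thetaMinSem F h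
              (fun u => {χ ∈ (TreeOf b).label u | ∃ p : ℕ × ℕ, RegBF Prod.fst χ p})
              q.1 q.2)
            (h v) (MF.neg ψ) := by
  constructor
  · intro hall h hroot hedge
    set fReg : (TreeOf b).V → Set (MF Λ (ℕ × ℕ)) :=
      fun u => {χ ∈ (TreeOf b).label u | ∃ p : ℕ × ℕ, RegBF Prod.fst χ p} with hfReg
    set θm : ℕ × ℕ → Set F.W := fun q => thetaMinSem F h fReg q.1 q.2 with hθm
    have hnot : ¬ sat F θm w₀ b.formula := fun hs => hall θm hs
    by_contra hcon
    push_neg at hcon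
    apply hnot
    rw [tree_sat_iff]
    refine ⟨h, hroot, hedge, ?_⟩
    intro v ψ hψ
    have hψA : ψ ∈ A := label_ok A b hb v ψ hψ
    rw [hA] at hψA
    rcases hψA with ⟨p, hreg⟩ | hneg
    · exact thetaMin_sat h fReg v ψ ⟨hψ, p, hreg⟩ p hreg
    · have h1 := hcon v ψ hψ hneg
      exact not_not.1 h1
  · intro hRHS θ hsat
    rw [tree_sat_iff] at hsat
    obtain ⟨h, hroot, hedge, hlab⟩ := hsat
    obtain ⟨v, ψ, hψ, ⟨χ, hχpos, hψeq⟩, hsatneg⟩ := hRHS h hroot hedge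
    subst hψeq
    set fReg : (TreeOf b).V → Set (MF Λ (ℕ × ℕ)) :=
      fun u => {χ ∈ (TreeOf b).label u | ∃ p : ℕ × ℕ, RegBF Prod.fst χ p} with hfReg
    have hmin : ∀ q : ℕ × ℕ, thetaMinSem F h fReg q.1 q.2 ⊆ θ q := by
      intro q
      have := thetaMin_le h fReg θ ?_ q.1 q.2
      · rwa [Prod.mk.eta] at this
      · intro j φ hφ p hreg
        exact hlab j φ hφ.1
    have hχm : sat F (fun q => thetaMinSem F h fReg q.1 q.2) (h v) χ := not_not.1 hsatneg
    have hχθ : sat F θ (h v) χ := satPos_mono hmin hχpos (h v) hχm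
    exact hlab v (MF.neg χ) hψ hχθ
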